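/- Let B be an invertible real 2×2 matrix, a ∈ ℝ², F(x̂) = B x̂ + a, and J := det B. Let Û ⊆ ℝ² be open, let M̂ : Û → ℝ^{2×2} and ẑ : Û → ℝ be twice continuously differentiable, and let M (Piola–Kirchhoff transform, M(F(x̂)) := |J|⁻¹ B M̂(x̂) Bᵀ) and z := ẑ ∘ F⁻¹ be their transforms on F(Û). Let T̂ ⊆ Û be a compact measurable set and T := F(T̂). Then ∫_T [ (div Div M)(x) · z(x) − M(x) : ∇∇z(x) ] dx = ∫_{T̂} [ (div Div M̂)(x̂) · ẑ(x̂) − M̂(x̂) : ∇∇ẑ(x̂) ] dx̂, where the integrals are with respect to two-dimensional Lebesgue measure. -/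

import Mathlib

open MeasureTheory

/-- The `i`-th partial derivative of a scalar field on `ℝ²`. -/
noncomputable def pd (i : Fin 2) (f : (Fin 2 → ℝ) → ℝ) (x : Fin 2 → ℝ) : ℝ :=
  fderiv ℝ f x (Pi.single i 1)

/-- The twice iterated divergence `div Div N = Σ_{i,j} ∂_i ∂_j N_{ij}` of a matrix field. -/
noncomputable def divDiv (N : (Fin 2 → ℝ) → Matrix (Fin 2) (Fin 2) ℝ) (x : Fin 2 → ℝ) : ℝ :=
  ∑ i : Fin 2, ∑ j : Fin 2, pd i (pd j (fun y => N y i j)) x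

/-- The Hessian `∇∇z = (∂_i ∂_j z)_{ij}` of a scalar field. -/
noncomputable def hessian (f : (Fin 2 → ℝ) → ℝ) (x : Fin 2 → ℝ) :
    Matrix (Fin 2) (Fin 2) ℝ :=
  Matrix.of fun i j => pd i (pd j f) x

/-- Frobenius inner product `A : C = Σ_{i,j} A_{ij} C_{ij}` of 2×2 matrices. -/
def frob (A C : Matrix (Fin 2) (Fin 2) ℝ) : ℝ :=
  ∑ i : Fin 2, ∑ j : Fin 2, A i j * C i j

lemma clm_apply_eq_sum (φ : (Fin 2 → ℝ) →L[ℝ] ℝ) (v : Fin 2 → ℝ) :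
    φ v = ∑ m, v m * φ (Pi.single m 1) := by
  have hv : v = ∑ m, (v m) • (Pi.single m (1:ℝ) : Fin 2 → ℝ) := by
    funext j
    simp [Finset.sum_apply, Pi.single_apply]
  conv_lhs => rw [hv]
  simp [smul_eq_mul]

lemma pd_comp (B : Matrix (Fin 2) (Fin 2) ℝ) (hB : IsUnit B.det) (a : Fin 2 → ℝ)
    (Uhat : Set (Fin 2 → ℝ)) (hU : IsOpen Uhat)
    (g G : (Fin 2 → ℝ) → ℝ)
    (hg : ∀ x ∈ Uhat, G (B.mulVec x + a) = g x)
    (hgd : DifferentiableOn ℝ g Uhat)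
    (j : Fin 2) (x : Fin 2 → ℝ) (hx : x ∈ Uhat) :
    pd j G (B.mulVec x + a) = ∑ m, B⁻¹ m j * pd m g x := by
  set Finv : (Fin 2 → ℝ) → (Fin 2 → ℝ) := fun y => B⁻¹.mulVec (y - a) with hFinv
  have hleft : ∀ w, Finv (B.mulVec w + a) = w := by
    intro w
    simp only [hFinv, add_sub_cancel_right, Matrix.mulVec_mulVec,
      Matrix.nonsing_inv_mul B hB, Matrix.one_mulVec]
  have hright : ∀ y, B.mulVec (Finv y) + a = y := by
    intro y
    simp only [hFinv, Matrix.mulVec_mulVec, Matrix.mul_nonsing_inv B hB, Matrix.one_mulVec]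
    abel
  set M' : (Fin 2 → ℝ) →L[ℝ] (Fin 2 → ℝ) :=
    LinearMap.toContinuousLinearMap (Matrix.mulVecLin B⁻¹) with hM'
  have hM'app : ∀ v, M' v = B⁻¹.mulVec v := fun v => rfl
  have hFinvEq : Finv = fun y => M' y - M' a := by
    funext y
    simp only [hM'app, hFinv]
    rw [← Matrix.mulVecLin_apply, ← Matrix.mulVecLin_apply, map_sub]
    rfl
  have hFinvDeriv : ∀ y, HasFDerivAt Finv M' y := by
    intro y
    rw [hFinvEq]
    exact (M'.hasFDerivAt).sub_const (M' a)
  have hFinvCont : Continuous Finv := by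
    rw [hFinvEq]; exact M'.continuous.sub continuous_const
  have hSopen : IsOpen (Finv ⁻¹' Uhat) := hU.preimage hFinvCont
  have hmemS : B.mulVec x + a ∈ Finv ⁻¹' Uhat := by
    rw [Set.mem_preimage, hleft x]; exact hx
  have heq : G =ᶠ[nhds (B.mulVec x + a)] (g ∘ Finv) := by
    filter_upwards [hSopen.mem_nhds hmemS] with y hy
    have := hg (Finv y) hy
    rw [hright y] at this
    simpa using this.symm ▸ rfl
  have hgx : DifferentiableAt ℝ g x := hgd.differentiableAt (hU.mem_nhds hx)
  have hcomp : HasFDerivAt (g ∘ Finv) ((fderiv ℝ g x).comp M') (B.mulVec x + a) := by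
    have hg' : HasFDerivAt g (fderiv ℝ g x) (Finv (B.mulVec x + a)) := by
      rw [hleft x]; exact hgx.hasFDerivAt
    exact hg'.comp _ (hFinvDeriv _)
  have hfd : fderiv ℝ G (B.mulVec x + a) = (fderiv ℝ g x).comp M' := by
    rw [heq.fderiv_eq]; exact hcomp.fderiv
  unfold pd
  rw [hfd]
  have : ((fderiv ℝ g x).comp M') (Pi.single j 1) = fderiv ℝ g x (B⁻¹.mulVec (Pi.single j 1)) := rfl
  rw [this, clm_apply_eq_sum]
  refine Finset.sum_congr rfl fun m _ => ?_
  rw [Matrix.mulVec_single]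
  simp only [MulOpposite.op_one, one_smul, Matrix.col_apply]

lemma pd_congr_nhds {f g' : (Fin 2 → ℝ) → ℝ} {x : Fin 2 → ℝ} (n : Fin 2)
    (h : f =ᶠ[nhds x] g') : pd n f x = pd n g' x := by
  unfold pd; rw [h.fderiv_eq]

lemma pd_sum {ι : Type*} (s : Finset ι) (c : ι → ℝ) (f : ι → (Fin 2 → ℝ) → ℝ)
    (x : Fin 2 → ℝ) (hf : ∀ i ∈ s, DifferentiableAt ℝ (f i) x) (n : Fin 2) :
    pd n (fun y => ∑ i ∈ s, c i * f i y) x = ∑ i ∈ s, c i * pd n (f i) x := by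
  unfold pd
  have h1 : ∀ i ∈ s, DifferentiableAt ℝ (fun y => c i * f i y) x :=
    fun i hi => (hf i hi).const_mul (c i)
  rw [fderiv_fun_sum h1]
  rw [ContinuousLinearMap.sum_apply]
  refine Finset.sum_congr rfl fun i hi => ?_
  rw [fderiv_const_mul (hf i hi) (c i)]
  simp

lemma pd_differentiableOn {Uhat : Set (Fin 2 → ℝ)} (hU : IsOpen Uhat)
    {g : (Fin 2 → ℝ) → ℝ} (hg : ContDiffOn ℝ 2 g Uhat) (m : Fin 2) :
    DifferentiableOn ℝ (pd m g) Uhat := by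
  have h1 : ContDiffOn ℝ 1 (fun x => fderiv ℝ g x) Uhat :=
    hg.fderiv_of_isOpen hU (by norm_num)
  have h2 : ContDiffOn ℝ 1 (pd m g) Uhat := h1.clm_apply contDiffOn_const
  exact h2.differentiableOn one_ne_zero

lemma pd2_comp (B : Matrix (Fin 2) (Fin 2) ℝ) (hB : IsUnit B.det) (a : Fin 2 → ℝ)
    (Uhat : Set (Fin 2 → ℝ)) (hU : IsOpen Uhat)
    (g G : (Fin 2 → ℝ) → ℝ)
    (hg : ∀ x ∈ Uhat, G (B.mulVec x + a) = g x)
    (hgd : ContDiffOn ℝ 2 g Uhat)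
    (i j : Fin 2) (x : Fin 2 → ℝ) (hx : x ∈ Uhat) :
    pd i (pd j G) (B.mulVec x + a)
      = ∑ n, ∑ m, B⁻¹ n i * B⁻¹ m j * pd n (pd m g) x := by
  have hpdm : ∀ m : Fin 2, DifferentiableOn ℝ (pd m g) Uhat := pd_differentiableOn hU hgd
  have hg' : ∀ y ∈ Uhat, pd j G (B.mulVec y + a) = ∑ m, B⁻¹ m j * pd m g y :=
    fun y hy => pd_comp B hB a Uhat hU g G hg (hgd.differentiableOn (by norm_num)) j y hy
  have hhd : DifferentiableOn ℝ (fun y => ∑ m, B⁻¹ m j * pd m g y) Uhat := by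
    apply DifferentiableOn.fun_sum
    intro m _
    exact (hpdm m).const_mul _
  rw [pd_comp B hB a Uhat hU (fun y => ∑ m, B⁻¹ m j * pd m g y) (pd j G) hg' hhd i x hx]
  refine Finset.sum_congr rfl fun n _ => ?_
  rw [pd_sum Finset.univ (fun m => B⁻¹ m j) (fun m => pd m g) x
    (fun m _ => (hpdm m).differentiableAt (hU.mem_nhds hx)) n]
  rw [Finset.mul_sum]
  refine Finset.sum_congr rfl fun m _ => by ring

lemma pd2_lincomb {ι : Type*} (s : Finset ι) (Uhat : Set (Fin 2 → ℝ)) (hU : IsOpen Uhat)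
    (c : ι → ℝ) (f : ι → (Fin 2 → ℝ) → ℝ) (hf : ∀ i ∈ s, ContDiffOn ℝ 2 (f i) Uhat)
    (n m : Fin 2) (x : Fin 2 → ℝ) (hx : x ∈ Uhat) :
    pd n (pd m (fun y => ∑ i ∈ s, c i * f i y)) x
      = ∑ i ∈ s, c i * pd n (pd m (f i)) x := by
  have heq : pd m (fun y => ∑ i ∈ s, c i * f i y) =ᶠ[nhds x]
      (fun y => ∑ i ∈ s, c i * pd m (f i) y) := by
    filter_upwards [hU.mem_nhds hx] with y hy
    exact pd_sum s c f y (fun i hi => ((hf i hi).differentiableOn (by norm_num)).differentiableAt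
      (hU.mem_nhds hy)) m
  rw [pd_congr_nhds n heq]
  exact pd_sum s c (fun i => pd m (f i)) x
    (fun i hi => (pd_differentiableOn hU (hf i hi) m).differentiableAt (hU.mem_nhds hx)) n

lemma frob_eq_trace (A C : Matrix (Fin 2) (Fin 2) ℝ) :
    frob A C = Matrix.trace (A * C.transpose) := by
  simp [frob, Matrix.trace, Matrix.mul_apply, Matrix.diag]

lemma sum_DD (D H : Matrix (Fin 2) (Fin 2) ℝ) (i j : Fin 2) :
    ∑ n, ∑ m, D n i * D m j * H n m = (D.transpose * H * D) i j := by
  simp only [Matrix.mul_apply, Matrix.transpose_apply, Finset.sum_mul]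
  rw [Finset.sum_comm]
  exact Finset.sum_congr rfl fun m _ => Finset.sum_congr rfl fun n _ => by ring

lemma sum_DAD (D A : Matrix (Fin 2) (Fin 2) ℝ) (n m : Fin 2) :
    ∑ i, ∑ j, D n i * D m j * A i j = (D * A * D.transpose) n m := by
  have := sum_DD D.transpose A n m
  simpa [Matrix.transpose_apply] using this

lemma DADt {D B : Matrix (Fin 2) (Fin 2) ℝ} (hD : D * B = 1)
    (P : Matrix (Fin 2) (Fin 2) ℝ) :
    D * (B * P * B.transpose) * D.transpose = P := by
  have hBD : B.transpose * D.transpose = 1 := by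
    rw [← Matrix.transpose_mul, hD, Matrix.transpose_one]
  calc D * (B * P * B.transpose) * D.transpose
      = D * (B * (P * (B.transpose * D.transpose))) := by simp only [Matrix.mul_assoc]
    _ = (D * B) * P := by rw [hBD, Matrix.mul_one, ← Matrix.mul_assoc]
    _ = P := by rw [hD, Matrix.one_mul]

lemma frob_smul (c : ℝ) (A C : Matrix (Fin 2) (Fin 2) ℝ) :
    frob (c • A) C = c * frob A C := by
  simp only [frob, Matrix.smul_apply, smul_eq_mul]
  rw [Finset.mul_sum]
  refine Finset.sum_congr rfl fun i _ => ?_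
  rw [Finset.mul_sum]
  exact Finset.sum_congr rfl fun j _ => by ring

lemma frob_piola {D B : Matrix (Fin 2) (Fin 2) ℝ} (hD : D * B = 1)
    (Mh H : Matrix (Fin 2) (Fin 2) ℝ) :
    frob (B * Mh * B.transpose) (D.transpose * H * D) = frob Mh H := by
  have hBD : B.transpose * D.transpose = 1 := by
    rw [← Matrix.transpose_mul, hD, Matrix.transpose_one]
  rw [frob_eq_trace, frob_eq_trace]
  have h1 : (D.transpose * H * D).transpose
      = D.transpose * (H.transpose * D) := by
    simp [Matrix.transpose_mul, Matrix.mul_assoc]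
  rw [h1]
  have h2 : B * Mh * B.transpose * (D.transpose * (H.transpose * D))
      = B * (Mh * (H.transpose * D)) := by
    calc B * Mh * B.transpose * (D.transpose * (H.transpose * D))
        = B * (Mh * ((B.transpose * D.transpose) * (H.transpose * D))) := by
          simp only [Matrix.mul_assoc]
      _ = B * (Mh * (H.transpose * D)) := by rw [hBD, Matrix.one_mul]
  rw [h2, Matrix.trace_mul_comm]
  calc Matrix.trace (Mh * (H.transpose * D) * B)
      = Matrix.trace (Mh * (H.transpose * (D * B))) := by simp only [Matrix.mul_assoc]
    _ = Matrix.trace (Mh * H.transpose) := by rw [hD, Matrix.mul_one]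

lemma sum4_comm (f : Fin 2 → Fin 2 → Fin 2 → Fin 2 → ℝ) :
    ∑ i, ∑ j, ∑ n, ∑ m, f i j n m = ∑ n, ∑ m, ∑ i, ∑ j, f i j n m := by
  calc ∑ i, ∑ j, ∑ n, ∑ m, f i j n m
      = ∑ i, ∑ n, ∑ j, ∑ m, f i j n m :=
        Finset.sum_congr rfl fun i _ => Finset.sum_comm
    _ = ∑ n, ∑ i, ∑ j, ∑ m, f i j n m := Finset.sum_comm
    _ = ∑ n, ∑ i, ∑ m, ∑ j, f i j n m :=
        Finset.sum_congr rfl fun n _ => Finset.sum_congr rfl fun i _ => Finset.sum_comm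
    _ = ∑ n, ∑ m, ∑ i, ∑ j, f i j n m :=
        Finset.sum_congr rfl fun n _ => Finset.sum_comm

lemma divdiv_alg {D B : Matrix (Fin 2) (Fin 2) ℝ} (hD : D * B = 1) (cJ : ℝ)
    (P : Fin 2 → Fin 2 → Matrix (Fin 2) (Fin 2) ℝ) :
    ∑ i, ∑ j, ∑ n, ∑ m, D n i * D m j * (cJ * (B * (P n m) * B.transpose) i j)
      = cJ * ∑ n, ∑ m, P n m n m := by
  rw [sum4_comm, Finset.mul_sum]
  refine Finset.sum_congr rfl fun n _ => ?_
  rw [Finset.mul_sum]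
  refine Finset.sum_congr rfl fun m _ => ?_
  have h1 : ∑ i, ∑ j, D n i * D m j * (cJ * (B * (P n m) * B.transpose) i j)
      = cJ * ∑ i, ∑ j, D n i * D m j * ((B * (P n m) * B.transpose) i j) := by
    rw [Finset.mul_sum]
    refine Finset.sum_congr rfl fun i _ => ?_
    rw [Finset.mul_sum]
    exact Finset.sum_congr rfl fun j _ => by ring
  rw [h1, sum_DAD, DADt hD]

lemma piola_entry (cJ : ℝ) (B Q : Matrix (Fin 2) (Fin 2) ℝ) (i j : Fin 2) :
    ∑ p : Fin 2 × Fin 2, (cJ * (B i p.1 * B j p.2)) * Q p.1 p.2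
      = cJ * (B * Q * B.transpose) i j := by
  rw [Fintype.sum_prod_type]
  simp only [Matrix.mul_apply, Matrix.transpose_apply, Finset.sum_mul, Finset.mul_sum]
  rw [Finset.sum_comm]
  exact Finset.sum_congr rfl fun k _ => Finset.sum_congr rfl fun l _ => by ring

/-- Invariance of the trace duality `⟨tr M, z⟩_{∂T}`, i.e. of the integral
`∫_T (div Div M) z − M : ∇∇z dx`, under the Piola–Kirchhoff transformation (eq.
(`eq:idboundary`) of Lemma 8, smooth case). Here `Mhat` plays the role of `M̂`, `zhat`
of `ẑ`, `Uhat` of `Û`, `That` of `T̂`, `xhat` of `x̂`. -/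
theorem stmt10
    (B : Matrix (Fin 2) (Fin 2) ℝ) (hB : IsUnit B.det) (a : Fin 2 → ℝ)
    (F : (Fin 2 → ℝ) → (Fin 2 → ℝ)) (hF : ∀ xhat, F xhat = B.mulVec xhat + a)
    (Uhat : Set (Fin 2 → ℝ)) (hUhat : IsOpen Uhat)
    (Mhat M : (Fin 2 → ℝ) → Matrix (Fin 2) (Fin 2) ℝ)
    (hMsmooth : ∀ i j : Fin 2, ContDiffOn ℝ 2 (fun x => Mhat x i j) Uhat)
    (hM : ∀ xhat ∈ Uhat, M (F xhat) = |B.det|⁻¹ • (B * Mhat xhat * B.transpose))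
    (zhat z : (Fin 2 → ℝ) → ℝ)
    (hzsmooth : ContDiffOn ℝ 2 zhat Uhat)
    (hz : ∀ xhat ∈ Uhat, z (F xhat) = zhat xhat)
    (That : Set (Fin 2 → ℝ)) (hThatcpt : IsCompact That)
    (hThatmeas : MeasurableSet That) (hThatsub : That ⊆ Uhat)
    (T : Set (Fin 2 → ℝ)) (hT : T = F '' That) :
    ∫ x in T, (divDiv M x * z x - frob (M x) (hessian z x))
      = ∫ xhat in That, (divDiv Mhat xhat * zhat xhat
          - frob (Mhat xhat) (hessian zhat xhat)) := by
  have hdet : B.det ≠ 0 := hB.ne_zero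
  have hD : B⁻¹ * B = 1 := Matrix.nonsing_inv_mul B hB
  set cJ : ℝ := |B.det|⁻¹ with hcJ
  -- the entries of `M` expressed as linear combinations of entries of `Mhat`
  set g : Fin 2 → Fin 2 → (Fin 2 → ℝ) → ℝ :=
    fun i j y => ∑ p : Fin 2 × Fin 2, (cJ * (B i p.1 * B j p.2)) * Mhat y p.1 p.2 with hgdef
  have hgM : ∀ i j : Fin 2, ∀ x ∈ Uhat, M (B.mulVec x + a) i j = g i j x := by
    intro i j x hx
    rw [← hF, hM x hx, hgdef]
    simp only
    rw [piola_entry]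
    simp [Matrix.smul_apply, smul_eq_mul]
  have hgsmooth : ∀ i j : Fin 2, ContDiffOn ℝ 2 (g i j) Uhat := by
    intro i j
    apply ContDiffOn.sum
    intro p _
    exact contDiffOn_const.mul (hMsmooth p.1 p.2)
  -- pointwise identity for divDiv
  have hdivDiv : ∀ x ∈ Uhat, divDiv M (B.mulVec x + a) = cJ * divDiv Mhat x := by
    intro x hx
    unfold divDiv
    have hstep : ∀ i j : Fin 2, pd i (pd j (fun y => M y i j)) (B.mulVec x + a)
        = ∑ n, ∑ m, B⁻¹ n i * B⁻¹ m j *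
            (cJ * (B * (Matrix.of fun k l => pd n (pd m (fun y => Mhat y k l)) x)
              * B.transpose) i j) := by
      intro i j
      rw [pd2_comp B hB a Uhat hUhat (g i j) (fun y => M y i j) (hgM i j) (hgsmooth i j) i j x hx]
      refine Finset.sum_congr rfl fun n _ => Finset.sum_congr rfl fun m _ => ?_
      congr 1
      rw [hgdef]
      simp only
      rw [pd2_lincomb Finset.univ Uhat hUhat
        (fun p : Fin 2 × Fin 2 => cJ * (B i p.1 * B j p.2))
        (fun p y => Mhat y p.1 p.2) (fun p _ => hMsmooth p.1 p.2) n m x hx]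
      rw [← piola_entry]
      exact Finset.sum_congr rfl fun p _ => by rw [Matrix.of_apply]
    calc ∑ i, ∑ j, pd i (pd j (fun y => M y i j)) (B.mulVec x + a)
        = ∑ i, ∑ j, ∑ n, ∑ m, B⁻¹ n i * B⁻¹ m j *
            (cJ * (B * (Matrix.of fun k l => pd n (pd m (fun y => Mhat y k l)) x)
              * B.transpose) i j) :=
          Finset.sum_congr rfl fun i _ => Finset.sum_congr rfl fun j _ => hstep i j
      _ = cJ * ∑ n, ∑ m, (Matrix.of fun k l => pd n (pd m (fun y => Mhat y k l)) x) n m :=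
          divdiv_alg hD cJ _
      _ = cJ * ∑ i, ∑ j, pd i (pd j (fun y => Mhat y i j)) x := by
          simp [Matrix.of_apply]
  -- pointwise identity for the Hessian
  have hhess : ∀ x ∈ Uhat, hessian z (B.mulVec x + a)
      = B⁻¹.transpose * hessian zhat x * B⁻¹ := by
    intro x hx
    have hzg : ∀ y ∈ Uhat, z (B.mulVec y + a) = zhat y := by
      intro y hy; rw [← hF]; exact hz y hy
    ext i j
    show pd i (pd j z) (B.mulVec x + a) = _
    rw [pd2_comp B hB a Uhat hUhat zhat z hzg hzsmooth i j x hx]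
    exact sum_DD B⁻¹ (hessian zhat x) i j
  -- pointwise identity for the integrand
  have hkey : ∀ x ∈ That,
      |B.det| • (divDiv M (F x) * z (F x) - frob (M (F x)) (hessian z (F x)))
        = divDiv Mhat x * zhat x - frob (Mhat x) (hessian zhat x) := by
    intro x hx
    have hxU : x ∈ Uhat := hThatsub hx
    rw [hF]
    rw [hdivDiv x hxU, hhess x hxU, ← hF, hz x hxU, hM x hxU]
    rw [frob_smul, frob_piola hD]
    rw [smul_eq_mul]
    have : |B.det| * cJ = 1 := mul_inv_cancel₀ (abs_ne_zero.mpr hdet)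
    calc |B.det| * (cJ * divDiv Mhat x * zhat x
          - cJ * frob (Mhat x) (hessian zhat x))
        = (|B.det| * cJ) * (divDiv Mhat x * zhat x - frob (Mhat x) (hessian zhat x)) := by ring
      _ = _ := by rw [this, one_mul]
  -- change of variables
  rw [hT]
  set B' : (Fin 2 → ℝ) →L[ℝ] (Fin 2 → ℝ) :=
    LinearMap.toContinuousLinearMap (Matrix.toLin' B) with hB'
  have hFd : ∀ x ∈ That, HasFDerivWithinAt F B' That x := by
    intro x _
    have hFe : F = fun y => B' y + a := by
      funext y; rw [hF]; simp [hB', Matrix.toLin'_apply]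
    have : HasFDerivAt F B' x := by
      rw [hFe]; exact (B'.hasFDerivAt).add_const a
    exact this.hasFDerivWithinAt
  have hinj : Set.InjOn F That := by
    intro p _ q _ h
    rw [hF, hF] at h
    have h2 : B.mulVec p = B.mulVec q := by
      have := congrArg (fun v => v - a) h
      simpa using this
    have h3 := congrArg (B⁻¹.mulVec) h2
    simpa only [Matrix.mulVec_mulVec, hD, Matrix.one_mulVec] using h3
  rw [integral_image_eq_integral_abs_det_fderiv_smul volume hThatmeas hFd hinj
    (fun x => divDiv M x * z x - frob (M x) (hessian z x))]
  have hdetB' : (B' : (Fin 2 → ℝ) →L[ℝ] (Fin 2 → ℝ)).det = B.det := by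
    rw [ContinuousLinearMap.det]
    rw [hB']
    rw [LinearMap.coe_toContinuousLinearMap]
    exact LinearMap.det_toLin' B
  refine setIntegral_congr_fun hThatmeas fun x hx => ?_
  simp only [hdetB']
  exact hkey x hx
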